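/- Let D be a division ring and let n > 1 be an integer. Let U ∈ M_n(D) be a unitriangular matrix (i.e., U is upper triangular or lower triangular with all diagonal entries equal to 1), and let H = diag(a₁,…,a_n) be a diagonal matrix such that a₁,…,a_{n−1} lie in the center of D and the elements a₁,…,a_n are pairwise distinct. Then there exist invertible matrices P, Q ∈ M_n(D) such that P⁻¹·(H·U)·P = H and Q⁻¹·(U·H)·Q = H. -/
import Mathlib

open Matrix Finset

section Aux
variable {D : Type*} [DivisionRing D] {n : ℕ}

/-- A "graded" strictly triangular matrix is nilpotent. -/
lemma aux_nilp (w : Fin n → ℕ) (hw : ∀ i, w i < n)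
    (N : Matrix (Fin n) (Fin n) D) (h : ∀ i j, ¬ w i < w j → N i j = 0) :
    N ^ n = 0 := by
  have key : ∀ k (i j : Fin n), (N ^ k) i j ≠ 0 → w i + k ≤ w j := by
    intro k
    induction k with
    | zero =>
      intro i j hij
      rw [pow_zero] at hij
      have hij' : i = j := by
        by_contra hc
        exact hij (Matrix.one_apply_ne hc)
      subst hij'; omega
    | succ k ih =>
      intro i j hij
      rw [pow_succ', Matrix.mul_apply] at hij
      obtain ⟨l, -, hl⟩ := Finset.exists_ne_zero_of_sum_ne_zero hij
      have h1 : N i l ≠ 0 := fun h0 => hl (by rw [h0, zero_mul])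
      have h2 : (N ^ k) l j ≠ 0 := fun h0 => hl (by rw [h0, mul_zero])
      have h3 := ih l j h2
      have h4 : w i < w l := by by_contra hc; exact h1 (h i l hc)
      omega
  ext i j
  rw [Matrix.zero_apply]
  by_contra h0
  have := key n i j h0
  have := hw j
  omega

/-- `1 + nilpotent` is invertible. -/
lemma aux_unit (N : Matrix (Fin n) (Fin n) D) (hN : N ^ n = 0) :
    ∃ P' : Matrix (Fin n) (Fin n) D, (1 + N) * P' = 1 ∧ P' * (1 + N) = 1 := by
  have hx : (-N) ^ n = 0 := by
    rcases Nat.even_or_odd n with h | h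
    · rw [h.neg_pow, hN]
    · rw [h.neg_pow, hN, neg_zero]
  refine ⟨∑ i ∈ Finset.range n, (-N) ^ i, ?_, ?_⟩
  · have h1 := mul_neg_geom_sum (-N) n
    rw [hx, sub_zero, sub_neg_eq_add] at h1
    exact h1
  · have h1 := geom_sum_mul_neg (-N) n
    rw [hx, sub_zero, sub_neg_eq_add] at h1
    exact h1

end Aux

section Conj
variable {D : Type*} [DivisionRing D] {n : ℕ}

/-- Conjugator for upper-triangular matrices. -/
noncomputable def PU (a : Fin n → D) (M : Matrix (Fin n) (Fin n) D) :
    Fin n → Fin n → D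
  | i, j =>
    if i = j then 1
    else if _h : (i : ℕ) < (j : ℕ) then
      (∑ k : Fin n, if _h2 : (i : ℕ) < (k : ℕ) then M i k * PU a M k j else 0) *
        (a j - a i)⁻¹
    else 0
termination_by i j => (j : ℕ) - (i : ℕ)
decreasing_by omega

/-- Conjugator for lower-triangular matrices. -/
noncomputable def PL (a : Fin n → D) (M : Matrix (Fin n) (Fin n) D) :
    Fin n → Fin n → D
  | i, j =>
    if i = j then 1
    else if _h : (j : ℕ) < (i : ℕ) then
      (a j - a i)⁻¹ *
        ∑ k : Fin n, if _h2 : (k : ℕ) < (i : ℕ) then M i k * PL a M k j else 0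
    else 0
termination_by i j => (i : ℕ) - (j : ℕ)
decreasing_by omega

lemma PU_eq (a : Fin n → D) (M : Matrix (Fin n) (Fin n) D) (i j : Fin n) :
    PU a M i j =
      if i = j then 1
      else if (i : ℕ) < (j : ℕ) then
        (∑ k : Fin n, if (i : ℕ) < (k : ℕ) then M i k * PU a M k j else 0) *
          (a j - a i)⁻¹
      else 0 := by
  rw [PU]
  simp only [dite_eq_ite]

lemma PL_eq (a : Fin n → D) (M : Matrix (Fin n) (Fin n) D) (i j : Fin n) :
    PL a M i j =
      if i = j then 1
      else if (j : ℕ) < (i : ℕ) then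
        (a j - a i)⁻¹ *
          ∑ k : Fin n, if (k : ℕ) < (i : ℕ) then M i k * PL a M k j else 0
      else 0 := by
  rw [PL]
  simp only [dite_eq_ite]

end Conj

section Main
variable {D : Type*} [DivisionRing D] {n : ℕ}

lemma lemA (a : Fin n → D)
    (hcen : ∀ i : Fin n, (i : ℕ) < n - 1 → a i ∈ Subring.center D)
    (hdist : Function.Injective a)
    (M : Matrix (Fin n) (Fin n) D)
    (hMu : ∀ i j : Fin n, (j : ℕ) < (i : ℕ) → M i j = 0)
    (hMd : ∀ i : Fin n, M i i = a i) :
    ∃ P P' : Matrix (Fin n) (Fin n) D, P * P' = 1 ∧ P' * P = 1 ∧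
      P' * M * P = Matrix.diagonal a := by
  set p : Fin n → Fin n → D := PU a M with hp
  have pdiag : ∀ i : Fin n, p i i = 1 := by
    intro i; rw [hp, PU_eq]; simp
  have plow : ∀ i j : Fin n, (j : ℕ) < (i : ℕ) → p i j = 0 := by
    intro i j hij
    rw [hp, PU_eq, if_neg, if_neg]
    · omega
    · intro h; subst h; omega
  -- the key identity: M * P = P * diagonal a, entrywise
  have key : ∀ i j : Fin n, (∑ k : Fin n, M i k * p k j) = p i j * a j := by
    intro i j
    rcases lt_trichotomy (i : ℕ) (j : ℕ) with hij | hij | hij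
    · -- i < j
      have hne : i ≠ j := fun h => by subst h; omega
      have hsub : a j - a i ≠ 0 := by
        intro h0
        exact hne (hdist (sub_eq_zero.mp h0)).symm
      set c : D := ∑ k : Fin n, if (i : ℕ) < (k : ℕ) then M i k * p k j else 0
        with hc
      have hpij : p i j = c * (a j - a i)⁻¹ := by
        rw [hp, PU_eq, if_neg hne, if_pos hij, hc, hp]
      have hsplit : ∀ k : Fin n, M i k * p k j =
          (if k = i then a i * p i j else 0) +
            (if (i : ℕ) < (k : ℕ) then M i k * p k j else 0) := by
        intro k
        rcases lt_trichotomy (k : ℕ) (i : ℕ) with h | h | h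
        · have hk : k ≠ i := fun hh => by subst hh; omega
          rw [hMu i k h, if_neg hk, if_neg (by omega), zero_mul, add_zero]
        · have hk : k = i := Fin.ext h
          subst hk
          rw [if_pos rfl, if_neg (by omega), hMd, add_zero]
        · have hk : k ≠ i := fun hh => by subst hh; omega
          rw [if_neg hk, if_pos h, zero_add]
      have hcom : ∀ g : D, g * a i = a i * g :=
        Subring.mem_center_iff.mp (hcen i (by omega))
      have h2 : p i j * (a j - a i) = c := by
        rw [hpij]; exact inv_mul_cancel_right₀ hsub c
      calc (∑ k : Fin n, M i k * p k j)
          = ∑ k : Fin n, ((if k = i then a i * p i j else 0) +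
              (if (i : ℕ) < (k : ℕ) then M i k * p k j else 0)) :=
            Finset.sum_congr rfl fun k _ => hsplit k
        _ = a i * p i j + c := by
            rw [Finset.sum_add_distrib, Finset.sum_ite_eq' Finset.univ i
              (fun _ => a i * p i j), if_pos (Finset.mem_univ i), ← hc]
        _ = p i j * a j := by
            rw [← hcom (p i j), ← h2]
            noncomm_ring
    · -- i = j
      have he : i = j := Fin.ext hij
      subst he
      rw [Finset.sum_eq_single i, hMd, pdiag, mul_one, one_mul]
      · intro k _ hk
        rcases lt_trichotomy (k : ℕ) (i : ℕ) with h | h | h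
        · rw [hMu i k h, zero_mul]
        · exact absurd (Fin.ext h) hk
        · rw [plow k i h, mul_zero]
      · intro h; exact absurd (Finset.mem_univ i) h
    · -- j < i
      rw [plow i j hij, zero_mul]
      refine Finset.sum_eq_zero fun k _ => ?_
      rcases lt_or_ge (k : ℕ) (i : ℕ) with h | h
      · rw [hMu i k h, zero_mul]
      · rw [plow k j (by omega), mul_zero]
  -- assemble
  set P : Matrix (Fin n) (Fin n) D := Matrix.of p with hP
  have hMP : M * P = P * Matrix.diagonal a := by
    ext i j
    rw [Matrix.mul_apply, Matrix.mul_diagonal]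
    exact key i j
  have hnil : (P - 1) ^ n = 0 := by
    apply aux_nilp (fun i => (i : ℕ)) (fun i => i.isLt)
    intro i j hij
    rw [Matrix.sub_apply]
    rcases eq_or_ne i j with h | h
    · subst h; rw [Matrix.one_apply_eq]
      exact sub_eq_zero.mpr (pdiag i)
    · rw [Matrix.one_apply_ne h, sub_zero]
      exact plow i j (by omega)
  obtain ⟨P', h1, h2⟩ := aux_unit (P - 1) hnil
  have hPe : (1 : Matrix (Fin n) (Fin n) D) + (P - 1) = P := by abel
  rw [hPe] at h1 h2
  exact ⟨P, P', h1, h2, by rw [mul_assoc, hMP, ← mul_assoc, h2, one_mul]⟩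

end Main

section MainB
variable {D : Type*} [DivisionRing D] {n : ℕ}

lemma lemB (a : Fin n → D)
    (hcen : ∀ i : Fin n, (i : ℕ) < n - 1 → a i ∈ Subring.center D)
    (hdist : Function.Injective a)
    (M : Matrix (Fin n) (Fin n) D)
    (hMu : ∀ i j : Fin n, (i : ℕ) < (j : ℕ) → M i j = 0)
    (hMd : ∀ i : Fin n, M i i = a i) :
    ∃ P P' : Matrix (Fin n) (Fin n) D, P * P' = 1 ∧ P' * P = 1 ∧
      P' * M * P = Matrix.diagonal a := by
  set p : Fin n → Fin n → D := PL a M with hp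
  have pdiag : ∀ i : Fin n, p i i = 1 := by
    intro i; rw [hp, PL_eq]; simp
  have pupp : ∀ i j : Fin n, (i : ℕ) < (j : ℕ) → p i j = 0 := by
    intro i j hij
    rw [hp, PL_eq, if_neg, if_neg]
    · omega
    · intro h; subst h; omega
  have key : ∀ i j : Fin n, (∑ k : Fin n, M i k * p k j) = p i j * a j := by
    intro i j
    rcases lt_trichotomy (j : ℕ) (i : ℕ) with hij | hij | hij
    · -- j < i
      have hne : i ≠ j := fun h => by subst h; omega
      have hsub : a j - a i ≠ 0 := by
        intro h0
        exact hne (hdist (sub_eq_zero.mp h0)).symm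
      set c : D := ∑ k : Fin n, if (k : ℕ) < (i : ℕ) then M i k * p k j else 0
        with hc
      have hpij : p i j = (a j - a i)⁻¹ * c := by
        rw [hp, PL_eq, if_neg hne, if_pos hij, hc, hp]
      have hsplit : ∀ k : Fin n, M i k * p k j =
          (if k = i then a i * p i j else 0) +
            (if (k : ℕ) < (i : ℕ) then M i k * p k j else 0) := by
        intro k
        rcases lt_trichotomy (k : ℕ) (i : ℕ) with h | h | h
        · have hk : k ≠ i := fun hh => by subst hh; omega
          rw [if_neg hk, if_pos h, zero_add]
        · have hk : k = i := Fin.ext h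
          subst hk
          rw [if_pos rfl, if_neg (by omega), hMd, add_zero]
        · have hk : k ≠ i := fun hh => by subst hh; omega
          rw [hMu i k h, if_neg hk, if_neg (by omega), zero_mul, add_zero]
      have hcom : ∀ g : D, g * a j = a j * g :=
        Subring.mem_center_iff.mp (hcen j (by omega))
      have h2 : (a j - a i) * p i j = c := by
        rw [hpij]; exact mul_inv_cancel_left₀ hsub c
      calc (∑ k : Fin n, M i k * p k j)
          = ∑ k : Fin n, ((if k = i then a i * p i j else 0) +
              (if (k : ℕ) < (i : ℕ) then M i k * p k j else 0)) :=
            Finset.sum_congr rfl fun k _ => hsplit k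
        _ = a i * p i j + c := by
            rw [Finset.sum_add_distrib, Finset.sum_ite_eq' Finset.univ i
              (fun _ => a i * p i j), if_pos (Finset.mem_univ i), ← hc]
        _ = p i j * a j := by
            rw [hcom (p i j), ← h2]
            noncomm_ring
    · -- i = j
      have he : j = i := Fin.ext hij
      subst he
      rw [Finset.sum_eq_single j, hMd, pdiag, mul_one, one_mul]
      · intro k _ hk
        rcases lt_trichotomy (k : ℕ) (j : ℕ) with h | h | h
        · rw [pupp k j h, mul_zero]
        · exact absurd (Fin.ext h) hk
        · rw [hMu j k h, zero_mul]
      · intro h; exact absurd (Finset.mem_univ j) h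
    · -- i < j
      rw [pupp i j hij, zero_mul]
      refine Finset.sum_eq_zero fun k _ => ?_
      rcases lt_or_ge (i : ℕ) (k : ℕ) with h | h
      · rw [hMu i k h, zero_mul]
      · rw [pupp k j (by omega), mul_zero]
  set P : Matrix (Fin n) (Fin n) D := Matrix.of p with hP
  have hMP : M * P = P * Matrix.diagonal a := by
    ext i j
    rw [Matrix.mul_apply, Matrix.mul_diagonal]
    exact key i j
  have hnil : (P - 1) ^ n = 0 := by
    apply aux_nilp (fun i => n - 1 - (i : ℕ))
      (fun i => by have := i.isLt; show n - 1 - (i : ℕ) < n; omega)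
    intro i j hij
    rw [Matrix.sub_apply]
    rcases eq_or_ne i j with h | h
    · subst h; rw [Matrix.one_apply_eq]
      exact sub_eq_zero.mpr (pdiag i)
    · rw [Matrix.one_apply_ne h, sub_zero]
      have hne : (i : ℕ) ≠ (j : ℕ) := Fin.val_ne_of_ne h
      have hi := i.isLt
      have hj := j.isLt
      have hij' : ¬ n - 1 - (i : ℕ) < n - 1 - (j : ℕ) := hij
      exact pupp i j (by omega)
  obtain ⟨P', h1, h2⟩ := aux_unit (P - 1) hnil
  have hPe : (1 : Matrix (Fin n) (Fin n) D) + (P - 1) = P := by abel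
  rw [hPe] at h1 h2
  exact ⟨P, P', h1, h2, by rw [mul_assoc, hMP, ← mul_assoc, h2, one_mul]⟩

end MainB



/-- Let `D` be a division ring, `n > 1`, `U` a (lower or upper)
unitriangular matrix, and `H = diag(a₁,…,aₙ)` with `a₁,…,a_{n−1}` central and
`a₁,…,aₙ` pairwise distinct. Then `H·U` and `U·H` are both similar to `H`. -/
theorem stmt_13 (D : Type*) [DivisionRing D] (n : ℕ) (hn : 1 < n)
    (U : Matrix (Fin n) (Fin n) D)
    (hU : (∀ i j : Fin n, j < i → U i j = 0) ∨ (∀ i j : Fin n, i < j → U i j = 0))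
    (hU1 : ∀ i : Fin n, U i i = 1)
    (a : Fin n → D)
    (hcen : ∀ i : Fin n, (i : ℕ) < n - 1 → a i ∈ Subring.center D)
    (hdist : Function.Injective a) :
    (∃ P P' : Matrix (Fin n) (Fin n) D, P * P' = 1 ∧ P' * P = 1 ∧
        P' * (Matrix.diagonal a * U) * P = Matrix.diagonal a) ∧
      (∃ Q Q' : Matrix (Fin n) (Fin n) D, Q * Q' = 1 ∧ Q' * Q = 1 ∧
        Q' * (U * Matrix.diagonal a) * Q = Matrix.diagonal a) := by
  rcases hU with hup | hlow
  · constructor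
    · apply lemA a hcen hdist
      · intro i j hij
        rw [Matrix.diagonal_mul, hup i j hij, mul_zero]
      · intro i
        rw [Matrix.diagonal_mul, hU1, mul_one]
    · apply lemA a hcen hdist
      · intro i j hij
        rw [Matrix.mul_diagonal, hup i j hij, zero_mul]
      · intro i
        rw [Matrix.mul_diagonal, hU1, one_mul]
  · constructor
    · apply lemB a hcen hdist
      · intro i j hij
        rw [Matrix.diagonal_mul, hlow i j hij, mul_zero]
      · intro i
        rw [Matrix.diagonal_mul, hU1, mul_one]
    · apply lemB a hcen hdist
      · intro i j hij
        rw [Matrix.mul_diagonal, hlow i j hij, zero_mul]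
      · intro i
        rw [Matrix.mul_diagonal, hU1, one_mul]
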